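/- Let K be a field, n ≥ 2, t₁,…,t_n ∈ K with t_j ≠ 0 and t_j ≠ 1 for all j, and let c : K → K be a ring homomorphism with c(t_j) = t_j⁻¹ for all j. Then for every permutation τ of {1,…,n} and every index i with 1 ≤ i ≤ n−1, the matrix γ = U_{n;i}(t_{τ(i)}) satisfies Ω(τ∘(i,i+1))·γ⁻¹ = γ̄ᵀ·Ω(τ), where (i,i+1) is the transposition of i and i+1. -/

import Mathlib

open Matrix

/-- `U K n i t` is the `n × n` matrix over `K` (1-indexed rows/columns `1,…,n`) that equals
the identity matrix except that its `2 × 2` block in rows `i, i+1` and columns `i, i+1`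
is `((1-t, 1), (t, 0))`.  A row index `r : Fin n` corresponds to the 1-indexed row `r.val + 1`. -/
def GassnerU (K : Type*) [CommRing K] (n : ℕ) (i : ℕ) (t : K) : Matrix (Fin n) (Fin n) K :=
  Matrix.of fun r c =>
    if r.val + 1 = i ∧ c.val + 1 = i then 1 - t
    else if r.val + 1 = i ∧ c.val = i then 1
    else if r.val = i ∧ c.val + 1 = i then t
    else if r.val = i ∧ c.val = i then 0
    else if r = c then 1 else 0

/-- `Ω(τ)`: the `n × n` matrix with diagonal entries `(1 - t (τ r))⁻¹`, entries below the
diagonal equal to `1`, and entries above the diagonal equal to `0`. -/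
def GassnerOmega {K : Type*} [Field K] {n : ℕ} (t : Fin n → K) (τ : Equiv.Perm (Fin n)) :
    Matrix (Fin n) (Fin n) K :=
  Matrix.of fun r c => if r = c then (1 - t (τ r))⁻¹ else if c < r then 1 else 0

section
variable {K : Type*} [Field K] {n : ℕ}

private lemma sum_two (A B : Fin n) (hAB : A ≠ B) (f : Fin n → K) (x y : K) :
    ∑ k, f k * (if k = A then x else if k = B then y else 0) = f A * x + f B * y := by
  have h : ∀ k : Fin n, f k * (if k = A then x else if k = B then y else 0)
      = (if k = A then f A * x else 0) + (if k = B then f B * y else 0) := by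
    intro k
    by_cases h1 : k = A
    · subst h1; simp [hAB]
    · by_cases h2 : k = B
      · subst h2; simp [h1]
      · simp [h1, h2]
  simp only [h, Finset.sum_add_distrib, Finset.sum_ite_eq', Finset.mem_univ, if_true]

private lemma sum_two' (A B : Fin n) (hAB : A ≠ B) (f : Fin n → K) (x y : K) :
    ∑ k, (if k = A then x else if k = B then y else 0) * f k = x * f A + y * f B := by
  have h : ∀ k, (if k = A then x else if k = B then y else 0) * f k
      = f k * (if k = A then x else if k = B then y else 0) := fun k => mul_comm _ _
  simp only [h, sum_two A B hAB f x y]; ring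

private lemma sum_delta (s : Fin n) (f : Fin n → K) :
    ∑ k, f k * (if k = s then 1 else 0) = f s := by
  simp [mul_ite, Finset.sum_ite_eq']

private lemma sum_delta' (s : Fin n) (f : Fin n → K) :
    ∑ k, (if k = s then 1 else 0) * f k = f s := by
  simp [ite_mul, Finset.sum_ite_eq']

private lemma GassnerU_apply (A B : Fin n) (hAB : (A:ℕ) + 1 = B) (u : K) (r k : Fin n) :
    GassnerU K n (B:ℕ) u r k =
      (if r = k then 1 else 0) +
      (if k = A then (if r = A then -u else if r = B then u else 0)
       else if k = B then (if r = A then 1 else if r = B then -1 else 0) else 0) := by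
  have h1 : ∀ x : Fin n, (x.val + 1 = (B:ℕ)) ↔ x = A := fun x => by
    rw [Fin.ext_iff]; omega
  have h2 : ∀ x : Fin n, (x.val = (B:ℕ)) ↔ x = B := fun x => by rw [Fin.ext_iff]
  have hne : A ≠ B := fun h => by rw [Fin.ext_iff] at h; omega
  simp only [GassnerU, of_apply, h1, h2]
  by_cases hrA : r = A <;> by_cases hrB : r = B <;> by_cases hkA : k = A <;>
    by_cases hkB : k = B <;> by_cases hrk : r = k <;> simp_all <;> ring

private lemma GassnerU_map (c : K →+* K) (i : ℕ) (u : K) :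
    (GassnerU K n i u).map c = GassnerU K n i (c u) := by
  ext r s
  simp only [GassnerU, map_apply, of_apply]
  split_ifs <;> simp

set_option maxHeartbeats 1000000 in
private lemma key (t : Fin n → K) (ht0 : ∀ j, t j ≠ 0) (ht1 : ∀ j, t j ≠ 1)
    (c : K →+* K) (hc : ∀ j, c (t j) = (t j)⁻¹)
    (τ : Equiv.Perm (Fin n)) (A B : Fin n) (hAB : (A:ℕ) + 1 = B) :
    GassnerOmega t (τ * Equiv.swap A B) * (GassnerU K n (B:ℕ) (t (τ A)))⁻¹ =
      ((GassnerU K n (B:ℕ) (t (τ A))).map c)ᵀ * GassnerOmega t τ := by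
  set u := t (τ A) with hu
  have hu0 : u ≠ 0 := ht0 _
  have hu1 : (1:K) - u ≠ 0 := sub_ne_zero.mpr fun h => ht1 _ h.symm
  have hne : A ≠ B := fun h => by rw [Fin.ext_iff] at h; omega
  have hlt : A < B := by rw [Fin.lt_def]; omega
  set V : Matrix (Fin n) (Fin n) K := Matrix.of (fun k s =>
    (if k = s then (1:K) else 0) +
    (if k = A then (if s = A then -1 else if s = B then u⁻¹ else 0)
     else if k = B then (if s = A then 1 else if s = B then -u⁻¹ else 0) else 0)) with hV
  have hmulV : ∀ (M : Matrix (Fin n) (Fin n) K) (r s : Fin n), (M * V) r s =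
      M r s + (M r A * (if s = A then -1 else if s = B then u⁻¹ else 0)
            + M r B * (if s = A then 1 else if s = B then -u⁻¹ else 0)) := by
    intro M r s
    rw [mul_apply]
    simp only [hV, of_apply, mul_add, Finset.sum_add_distrib, sum_two A B hne, sum_delta]
  have hUV : GassnerU K n (B:ℕ) u * V = 1 := by
    ext r s
    rw [hmulV]
    simp only [GassnerU_apply A B hAB u, Matrix.one_apply]
    by_cases hrA : r = A <;> by_cases hrB : r = B <;> by_cases hsA : s = A <;>
      by_cases hsB : s = B <;> by_cases hrs : r = s <;>
      simp_all [Ne.symm hne, mul_inv_cancel₀ (ht0 (τ A)), add_mul, neg_mul, one_mul]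
  have hinv : (GassnerU K n (B:ℕ) u)⁻¹ = V := Matrix.inv_eq_right_inv hUV
  have hcu : c u = u⁻¹ := hc _
  rw [hinv, GassnerU_map, hcu]
  ext r s
  rw [hmulV, mul_apply]
  simp only [transpose_apply, GassnerU_apply A B hAB u⁻¹]
  simp only [add_mul, Finset.sum_add_distrib, sum_delta']
  have hd : ∀ j, (1:K) - t (τ j) ≠ 0 := fun j => sub_ne_zero.mpr fun h => ht1 _ h.symm
  have hBA : ¬ B < A := not_lt.mpr hlt.le
  have hne' : B ≠ A := Ne.symm hne
  by_cases hrA : r = A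
  · simp only [hrA, eq_self_iff_true, if_true]
    rw [sum_two' A B hne]
    by_cases hsA : s = A
    · simp only [hsA, eq_self_iff_true, if_true]
      simp [GassnerOmega, Equiv.swap_apply_left, hne, hne', hBA, hlt]
      rw [hu]
      linear_combination (1 - t (τ A))⁻¹ * mul_inv_cancel₀ (ht0 (τ A)) + (t (τ A))⁻¹ * mul_inv_cancel₀ (hd A)
    · by_cases hsB : s = B
      · simp only [hsB, if_neg hne', eq_self_iff_true, if_true, if_neg hne]
        simp [GassnerOmega, Equiv.swap_apply_left, hne, hne', hBA, hlt]
        ring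
      · simp only [if_neg hsA, if_neg hsB]
        have h1 : A ≠ s := fun h => hsA h.symm
        have h2 : B ≠ s := fun h => hsB h.symm
        have hsAv : (s:ℕ) ≠ (A:ℕ) := fun h => hsA (Fin.ext h)
        have hsBv : (s:ℕ) ≠ (B:ℕ) := fun h => hsB (Fin.ext h)
        simp only [GassnerOmega, of_apply, Equiv.Perm.mul_apply, if_neg h1, if_neg h2,
          mul_zero, add_zero]
        by_cases h : s < A
        · have h' : s < B := lt_trans h hlt
          simp [h, h']
        · have h' : ¬ s < B := by rw [Fin.lt_def] at h ⊢; omega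
          simp [h, h']
  · by_cases hrB : r = B
    · simp only [hrB, if_neg hne', eq_self_iff_true, if_true]
      rw [sum_two' A B hne]
      by_cases hsA : s = A
      · simp only [hsA, eq_self_iff_true, if_true]
        simp [GassnerOmega, Equiv.swap_apply_right, hne, hne', hBA, hlt]
      · by_cases hsB : s = B
        · simp only [hsB, if_neg hne', eq_self_iff_true, if_true, if_neg hne]
          simp [GassnerOmega, Equiv.swap_apply_right, hne, hne', hBA, hlt]
          rw [hu]
          linear_combination -((1 - t (τ A))⁻¹ * mul_inv_cancel₀ (ht0 (τ A)) + (t (τ A))⁻¹ * mul_inv_cancel₀ (hd A))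
        · simp only [if_neg hsA, if_neg hsB]
          have h1 : A ≠ s := fun h => hsA h.symm
          have h2 : B ≠ s := fun h => hsB h.symm
          have hsAv : (s:ℕ) ≠ (A:ℕ) := fun h => hsA (Fin.ext h)
          have hsBv : (s:ℕ) ≠ (B:ℕ) := fun h => hsB (Fin.ext h)
          simp only [GassnerOmega, of_apply, Equiv.Perm.mul_apply, if_neg h1, if_neg h2,
            mul_zero, add_zero]
          by_cases h : s < A
          · have h' : s < B := lt_trans h hlt
            simp [h, h']
          · have h' : ¬ s < B := by rw [Fin.lt_def] at h ⊢; omega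
            simp [h, h']
    · simp only [if_neg hrA, if_neg hrB, zero_mul, Finset.sum_const_zero, mul_zero, add_zero]
      have h1 : r ≠ A := hrA
      have h2 : r ≠ B := hrB
      have hrAv : (r:ℕ) ≠ (A:ℕ) := fun h => hrA (Fin.ext h)
      have hrBv : (r:ℕ) ≠ (B:ℕ) := fun h => hrB (Fin.ext h)
      by_cases hsA : s = A
      · simp only [hsA, eq_self_iff_true, if_true]
        simp only [GassnerOmega, of_apply, Equiv.Perm.mul_apply, if_neg h1, if_neg h2,
          mul_zero, add_zero]
        by_cases h : A < r
        · have h' : B < r := by rw [Fin.lt_def] at h ⊢; omega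
          simp [h, h']
        · have h' : ¬ B < r := by rw [Fin.lt_def] at h ⊢; omega
          simp [h, h']
      · by_cases hsB : s = B
        · simp only [hsB, if_neg hne', eq_self_iff_true, if_true, if_neg hne]
          simp only [GassnerOmega, of_apply, Equiv.Perm.mul_apply, if_neg h1, if_neg h2,
            mul_zero, add_zero]
          by_cases h : A < r
          · have h' : B < r := by rw [Fin.lt_def] at h ⊢; omega
            simp [h, h']
          · have h' : ¬ B < r := by rw [Fin.lt_def] at h ⊢; omega
            simp [h, h']
        · simp [GassnerOmega, Equiv.swap_apply_of_ne_of_ne hrA hrB, hsA, hsB]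
end

/-- Unitarity property for a positive generator below an arbitrary permutation `τ`:
for `γ = U_{n;i}(t_{τ(i)})` one has `Ω(τ ∘ (i,i+1)) · γ⁻¹ = γ̄ᵀ · Ω(τ)`, where `γ̄` is the
entrywise application of the ring homomorphism `c` (which satisfies `c (t_j) = t_j⁻¹`). -/
theorem gassner_unitarity_pos_generator_perm {K : Type*} [Field K] (n : ℕ) (hn : 2 ≤ n)
    (t : Fin n → K) (ht0 : ∀ j, t j ≠ 0) (ht1 : ∀ j, t j ≠ 1)
    (c : K →+* K) (hc : ∀ j, c (t j) = (t j)⁻¹)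
    (τ : Equiv.Perm (Fin n)) (i : ℕ) (hi1 : 1 ≤ i) (hi2 : i ≤ n - 1) :
    GassnerOmega t (τ * Equiv.swap (⟨i - 1, by omega⟩ : Fin n) ⟨i, by omega⟩) *
        (GassnerU K n i (t (τ ⟨i - 1, by omega⟩)))⁻¹ =
      ((GassnerU K n i (t (τ ⟨i - 1, by omega⟩))).map c)ᵀ * GassnerOmega t τ := by
  have h := key t ht0 ht1 c hc τ (⟨i - 1, by omega⟩ : Fin n) ⟨i, by omega⟩ (by simp; omega)
  simpa using h
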